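/- Let J be a poset ideal in Hom(P,[n]) with ∅ ≠ J ⊊ Hom(P,[n]). Then there exists a face G of Δ(J) of cardinality |P|·(n−1) − 1 that is contained in exactly one facet of Δ(J). -/
import Mathlib


variable {P : Type*} [PartialOrder P] [Fintype P] [DecidableEq P]

/-- The graph `Γφ = {(p, φ p) | p ∈ P}` of a map φ : P → [n], as a finite set. -/
def GammaF {n : ℕ} (φ : P → Fin n) : Finset (P × Fin n) :=
  Finset.univ.image fun p => (p, φ p)

/-- F is a face of Δ(J) iff F misses the graph Γφ of some φ ∈ J. -/
def IsFace {n : ℕ} (J : Set (P → Fin n)) (F : Finset (P × Fin n)) : Prop :=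
  ∃ φ ∈ J, ∀ p : P, (p, φ p) ∉ F

/-- A facet of Δ(J) is a face maximal under inclusion. -/
def IsFacet {n : ℕ} (J : Set (P → Fin n)) (F : Finset (P × Fin n)) : Prop :=
  IsFace J F ∧ ∀ G : Finset (P × Fin n), IsFace J G → F ⊆ G → F = G

lemma mem_GammaF {n : ℕ} (φ : P → Fin n) (x : P × Fin n) :
    x ∈ GammaF φ ↔ x.2 = φ x.1 := by
  obtain ⟨p, y⟩ := x
  simp [GammaF, Prod.ext_iff]
  aesop

lemma card_GammaF {n : ℕ} (φ : P → Fin n) : (GammaF φ).card = Fintype.card P := by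
  rw [GammaF, Finset.card_image_of_injective _ (fun a b h => congrArg Prod.fst h)]
  exact Finset.card_univ

/-- Let J be a poset ideal in Hom(P,[n]) with ∅ ≠ J ⊊ Hom(P,[n]).  Then some face G of Δ(J)
of cardinality |P|·(n−1) − 1 is contained in exactly one facet of Δ(J). -/
theorem stmt17 [Nonempty P] {n : ℕ} (J : Set (P → Fin n))
    (hJ1 : ∀ φ ∈ J, Monotone φ)
    (hJ2 : ∀ φ ∈ J, ∀ ψ : P → Fin n, Monotone ψ → ψ ≤ φ → ψ ∈ J)
    (hJne : J.Nonempty)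
    (hproper : ∃ ψ : P → Fin n, Monotone ψ ∧ ψ ∉ J) :
    ∃ G : Finset (P × Fin n), IsFace J G ∧ G.card = Fintype.card P * (n - 1) - 1 ∧
      ∃! F : Finset (P × Fin n), IsFacet J F ∧ G ⊆ F := by
  classical
  -- Key step: find φ ∈ J, p₀, j ≠ φ p₀ with `Function.update φ p₀ j ∉ J`.
  by_cases hkey : ∃ φ ∈ J, ∃ p₀ : P, ∃ j : Fin n,
      j ≠ φ p₀ ∧ Function.update φ p₀ j ∉ J
  · obtain ⟨φ, hφJ, p₀, j, hj, hupd⟩ := hkey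
    set Fc : Finset (P × Fin n) := Finset.univ \ GammaF φ with hFc
    have hx : (p₀, j) ∈ Fc := by
      simp [hFc, mem_GammaF, hj]
    set G : Finset (P × Fin n) := Fc.erase (p₀, j) with hG
    have hGsub : G ⊆ Fc := Finset.erase_subset _ _
    have hFcface : IsFace J Fc := by
      refine ⟨φ, hφJ, fun p => ?_⟩
      simp [hFc, mem_GammaF]
    have hGface : IsFace J G := by
      refine ⟨φ, hφJ, fun p hmem => ?_⟩
      have : (p, φ p) ∈ Fc := hGsub hmem
      simp [hFc, mem_GammaF] at this
    -- cardinality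
    have hcardFc : Fc.card = Fintype.card P * n - Fintype.card P := by
      rw [hFc, Finset.card_sdiff_of_subset (Finset.subset_univ _), card_GammaF,
        Finset.card_univ, Fintype.card_prod, Fintype.card_fin]
    have hcardG : G.card = Fintype.card P * (n - 1) - 1 := by
      rw [hG, Finset.card_erase_of_mem hx, hcardFc]
      have : Fintype.card P * (n - 1) = Fintype.card P * n - Fintype.card P := by
        rw [Nat.mul_sub, Nat.mul_one]
      omega
    -- Fc is a facet
    have hFcfacet : IsFacet J Fc := by
      refine ⟨hFcface, fun H hHface hsub => ?_⟩
      obtain ⟨φ', hφ'J, hmiss⟩ := hHface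
      have hφ'φ : φ' = φ := by
        funext p
        have : (p, φ' p) ∉ H := hmiss p
        have hnot : (p, φ' p) ∉ Fc := fun h => this (hsub h)
        simpa [hFc, mem_GammaF] using hnot
      apply le_antisymm hsub
      intro x hxH
      have : x ∉ GammaF φ := by
        rw [mem_GammaF]
        intro hx2
        apply hmiss x.1
        rw [hφ'φ, ← hx2]
        exact hxH
      simp [hFc, this]
    refine ⟨G, hGface, hcardG, Fc, ⟨hFcfacet, hGsub⟩, ?_⟩
    -- uniqueness
    rintro F ⟨⟨⟨φ', hφ'J, hmiss⟩, hmax⟩, hGF⟩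
    have hFeq : F = Finset.univ \ GammaF φ' := by
      apply hmax
      · refine ⟨φ', hφ'J, fun p => ?_⟩
        simp [mem_GammaF]
      · intro x hxF
        have : x ∉ GammaF φ' := by
          rw [mem_GammaF]
          intro hx2
          apply hmiss x.1
          rw [← hx2]
          exact hxF
        simp [this]
    have hφ'φ : φ' = φ := by
      by_contra hne
      have : ∃ p, φ' p ≠ φ p := by
        by_contra h
        push_neg at h
        exact hne (funext h)
      obtain ⟨p, hp⟩ := this
      -- (p, φ' p) ∉ G since G ⊆ F and F misses Γφ'
      have h1 : (p, φ' p) ∉ G := fun h => hmiss p (hGF h)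
      have h2 : (p, φ' p) = (p₀, j) := by
        by_contra h2
        apply h1
        rw [hG, Finset.mem_erase]
        exact ⟨h2, by simp [hFc, mem_GammaF, hp]⟩
      have hpp : p = p₀ := congrArg Prod.fst h2
      have hji : φ' p = j := congrArg Prod.snd h2
      -- φ' = Function.update φ p₀ j
      have : φ' = Function.update φ p₀ j := by
        funext q
        by_cases hq : q = p₀
        · subst hq; rw [Function.update_self, ← hpp, hji]
        · rw [Function.update_of_ne hq]
          by_contra hq2
          have h1q : (q, φ' q) ∉ G := fun h => hmiss q (hGF h)
          apply h1q
          rw [hG, Finset.mem_erase]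
          constructor
          · intro h
            exact hq (congrArg Prod.fst h)
          · simp [hFc, mem_GammaF, hq2]
      exact hupd (this ▸ hφ'J)
    rw [hFeq, hφ'φ, ← hFc]
  · -- otherwise J is everything, contradicting hproper
    exfalso
    push_neg at hkey
    obtain ⟨ψ, hψm, hψJ⟩ := hproper
    obtain ⟨φ, hφJ⟩ := hJne
    apply hψJ
    have main : ∀ k (χ : P → Fin n),
        (Finset.univ.filter fun p => χ p ≠ φ p).card = k → χ ∈ J := by
      intro k
      induction k with
      | zero =>
        intro χ h
        have : χ = φ := by
          funext p
          by_contra hne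
          have : p ∈ Finset.univ.filter fun p => χ p ≠ φ p := by
            simp [hne]
          rw [Finset.card_eq_zero] at h
          simp [h] at this
        exact this ▸ hφJ
      | succ k ih =>
        intro χ h
        have hne : (Finset.univ.filter fun p => χ p ≠ φ p).Nonempty := by
          rw [← Finset.card_pos, h]; omega
        obtain ⟨p, hp⟩ := hne
        have hpne : χ p ≠ φ p := (Finset.mem_filter.mp hp).2
        set χ' := Function.update χ p (φ p) with hχ'
        have hfil : (Finset.univ.filter fun q => χ' q ≠ φ q)
            = (Finset.univ.filter fun q => χ q ≠ φ q).erase p := by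
          ext q
          simp only [Finset.mem_filter, Finset.mem_erase, Finset.mem_univ, true_and]
          constructor
          · intro hq
            by_cases hqp : q = p
            · subst hqp; rw [hχ', Function.update_self] at hq; exact absurd rfl hq
            · rw [hχ', Function.update_of_ne hqp] at hq; exact ⟨hqp, hq⟩
          · rintro ⟨hqp, hq⟩
            rw [hχ', Function.update_of_ne hqp]; exact hq
        have hχ'J : χ' ∈ J := by
          apply ih
          rw [hfil, Finset.card_erase_of_mem hp, h]
          omega
        have hχeq : χ = Function.update χ' p (χ p) := by
          funext q
          by_cases hq : q = p
          · subst hq; rw [Function.update_self]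
          · rw [Function.update_of_ne hq, hχ', Function.update_of_ne hq]
        rw [hχeq]
        apply hkey χ' hχ'J p (χ p)
        rw [hχ', Function.update_self]
        exact hpne
    exact main _ ψ rfl
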